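/- Fix an integer d ≥ 1 and a polynomial p(x) = a_0 + a_1 x + ⋯ + a_d x^d whose coefficients a_0, …, a_d are positive integers, and let C_p(n,k) be the coefficient of x^k in p(x)^n. Then there exist n₁ ∈ ℕ and a constant C₁ > 0, depending only on a_0, …, a_d, such that for all n ≥ n₁ and all k with 0 ≤ k ≤ nd − 1, both C_p(n, k+1) ≤ C₁ · n · C_p(n,k) and C_p(n,k) ≤ C₁ · n · C_p(n,k+1) hold. -/
import Mathlib

/-- Part 1 of the paper's Lemma 6: the ratio of consecutive generalized
binomial coefficients `C_p(n,k) = [x^k] p(x)^n` in row `n` is at most `C₁·n`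
for `n` large enough, with `n₁` and `C₁` depending only on the coefficients
of `p`. -/
theorem generalized_binomial_consecutive_ratio
    (d : ℕ) (hd : 1 ≤ d) (a : ℕ → ℕ) (ha : ∀ i ≤ d, 0 < a i)
    (P : Polynomial ℕ)
    (hP : P = ∑ i ∈ Finset.range (d + 1), Polynomial.C (a i) * Polynomial.X ^ i) :
    ∃ (n₁ : ℕ) (C₁ : ℝ), 0 < C₁ ∧ ∀ n : ℕ, n₁ ≤ n → ∀ k : ℕ, k + 1 ≤ n * d →
      ((P ^ n).coeff (k + 1) : ℝ) ≤ C₁ * n * ((P ^ n).coeff k : ℝ) ∧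
      ((P ^ n).coeff k : ℝ) ≤ C₁ * n * ((P ^ n).coeff (k + 1) : ℝ) := by
  classical
  have hco : ∀ k, P.coeff k = if k ≤ d then a k else 0 := by
    intro k
    rw [hP, Polynomial.finset_sum_coeff]
    simp only [Polynomial.coeff_C_mul, Polynomial.coeff_X_pow, mul_ite, mul_one, mul_zero]
    rw [Finset.sum_ite_eq (Finset.range (d+1)) k a]
    simp [Nat.lt_succ_iff]
  set M : ℕ := (Finset.range (d+1)).sup a with hMdef
  have hMa : ∀ j, P.coeff j ≤ M := by
    intro j; rw [hco]; split_ifs with h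
    · exact Finset.le_sup (Finset.mem_range.2 (Nat.lt_succ_of_le h))
    · exact Nat.zero_le M
  have hpos : ∀ j, j ≤ d → 0 < P.coeff j := by
    intro j hj; rw [hco]; simpa [hj] using ha j hj
  have hM1 : 0 < M := lt_of_lt_of_le (hpos 0 (Nat.zero_le d)) (by simpa [hco] using hMa 0)
  -- convolution
  have hA : ∀ n k, (P^(n+1)).coeff k
      = ∑ i ∈ Finset.range (k+1), (P^n).coeff i * P.coeff (k-i) := by
    intro n k
    rw [pow_succ, Polynomial.coeff_mul, Finset.Nat.sum_antidiagonal_eq_sum_range_succ_mk]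
  -- derivative identity
  have hB : ∀ n k, (P^(n+1)).coeff (k+1) * (k+1)
      = (n+1) * ∑ i ∈ Finset.range (k+1), (P^n).coeff i * (P.coeff (k-i+1) * (k-i+1)) := by
    intro n k
    have h0 : Polynomial.derivative (P^(n+1))
        = Polynomial.C ((n+1:ℕ)) * (P^n * Polynomial.derivative P) := by
      rw [Polynomial.derivative_pow, Nat.add_sub_cancel, mul_assoc]; norm_num
    have h := congrArg (fun q => Polynomial.coeff q k) h0
    simp only [Polynomial.coeff_C_mul] at h
    simp only [Polynomial.coeff_derivative, Nat.cast_id,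
      Polynomial.coeff_mul, Finset.Nat.sum_antidiagonal_eq_sum_range_succ_mk] at h
    rw [h]
  -- inequality 1 (ℕ level)
  have ineq1 : ∀ n k, (P^(n+1)).coeff (k+1) ≤ (n+1) * (d*M) * (P^(n+1)).coeff k := by
    intro n k
    have h1 : (P^(n+1)).coeff (k+1) ≤ (P^(n+1)).coeff (k+1) * (k+1) :=
      Nat.le_mul_of_pos_right _ (Nat.succ_pos k)
    have h2 : ∑ i ∈ Finset.range (k+1), (P^n).coeff i * (P.coeff (k-i+1) * (k-i+1))
        ≤ ∑ i ∈ Finset.range (k+1), (d*M) * ((P^n).coeff i * P.coeff (k-i)) := by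
      apply Finset.sum_le_sum
      intro i hi
      have hkey : P.coeff (k-i+1) * (k-i+1) ≤ d*M*P.coeff (k-i) := by
        by_cases hj : k - i + 1 ≤ d
        · calc P.coeff (k-i+1) * (k-i+1) ≤ M * d := Nat.mul_le_mul (hMa _) hj
            _ = d * M * 1 := by ring
            _ ≤ d * M * P.coeff (k-i) :=
              Nat.mul_le_mul_left _ (hpos (k-i) (by omega))
        · rw [hco (k-i+1)]; simp [hj]
      calc (P^n).coeff i * (P.coeff (k-i+1) * (k-i+1))
          ≤ (P^n).coeff i * (d*M*P.coeff (k-i)) := Nat.mul_le_mul_left _ hkey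
        _ = (d*M) * ((P^n).coeff i * P.coeff (k-i)) := by ring
    calc (P^(n+1)).coeff (k+1) ≤ (P^(n+1)).coeff (k+1) * (k+1) := h1
      _ = (n+1) * ∑ i ∈ Finset.range (k+1), (P^n).coeff i * (P.coeff (k-i+1) * (k-i+1)) := hB n k
      _ ≤ (n+1) * ((d*M) * ∑ i ∈ Finset.range (k+1), (P^n).coeff i * P.coeff (k-i)) :=
          Nat.mul_le_mul_left _ (h2.trans_eq (Finset.mul_sum _ _ _).symm)
      _ = (n+1) * (d*M) * (P^(n+1)).coeff k := by rw [hA n k]; ring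
  -- variant of hB with k * coeff k
  have hC : ∀ n k, (P^(n+1)).coeff k * k
      = (n+1) * ∑ i ∈ Finset.range (k+1), (P^n).coeff i * ((k-i) * P.coeff (k-i)) := by
    intro n k
    cases k with
    | zero => simp
    | succ k =>
      have e : ∑ i ∈ Finset.range (k+1+1), (P^n).coeff i * ((k+1-i) * P.coeff (k+1-i))
          = ∑ i ∈ Finset.range (k+1), (P^n).coeff i * (P.coeff (k-i+1) * (k-i+1)) := by
        rw [Finset.sum_range_succ]
        simp only [Nat.sub_self, zero_mul, mul_zero, add_zero]
        apply Finset.sum_congr rfl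
        intro i hi
        have hik : i ≤ k := Nat.lt_succ_iff.mp (Finset.mem_range.mp hi)
        have h' : k + 1 - i = (k - i) + 1 := by omega
        rw [h']; ring
      rw [e]
      exact hB n k
  -- the complementary identity
  have hD : ∀ n k, (n+1) * d * (P^(n+1)).coeff k
      = (P^(n+1)).coeff k * k
        + (n+1) * ∑ i ∈ Finset.range (k+1), (P^n).coeff i * ((d - (k-i)) * P.coeff (k-i)) := by
    intro n k
    have hsplit : ∀ j, d * P.coeff j = (j * P.coeff j) + (d - j) * P.coeff j := by
      intro j
      by_cases hj : j ≤ d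
      · have hdj : d = j + (d - j) := by omega
        calc d * P.coeff j = (j + (d - j)) * P.coeff j := by rw [← hdj]
          _ = j * P.coeff j + (d - j) * P.coeff j := by ring
      · rw [hco j]; simp [hj]
    calc (n+1) * d * (P^(n+1)).coeff k
        = (n+1) * ∑ i ∈ Finset.range (k+1), (P^n).coeff i * (d * P.coeff (k-i)) := by
          rw [hA n k, Finset.mul_sum, Finset.mul_sum]
          apply Finset.sum_congr rfl
          intro i _; ring
      _ = (n+1) * ∑ i ∈ Finset.range (k+1),
            ((P^n).coeff i * ((k-i) * P.coeff (k-i))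
              + (P^n).coeff i * ((d - (k-i)) * P.coeff (k-i))) := by
          congr 1
          apply Finset.sum_congr rfl
          intro i _
          rw [hsplit (k-i), Nat.mul_add]
      _ = (n+1) * ∑ i ∈ Finset.range (k+1), (P^n).coeff i * ((k-i) * P.coeff (k-i))
          + (n+1) * ∑ i ∈ Finset.range (k+1), (P^n).coeff i * ((d - (k-i)) * P.coeff (k-i)) := by
          rw [Finset.sum_add_distrib, Nat.mul_add]
      _ = _ := by rw [← hC n k]
  -- inequality 2 (ℕ level)
  have ineq2 : ∀ n k, k + 1 ≤ (n+1) * d →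
      (P^(n+1)).coeff k ≤ (n+1) * (d*M) * (P^(n+1)).coeff (k+1) := by
    intro n k hk
    have hsum : ∑ i ∈ Finset.range (k+1), (P^n).coeff i * ((d - (k-i)) * P.coeff (k-i))
        ≤ (d*M) * (P^(n+1)).coeff (k+1) := by
      have hle : ∑ i ∈ Finset.range (k+1), (P^n).coeff i * ((d - (k-i)) * P.coeff (k-i))
          ≤ ∑ i ∈ Finset.range (k+1), (d*M) * ((P^n).coeff i * P.coeff (k+1-i)) := by
        apply Finset.sum_le_sum
        intro i hi
        have hik : i ≤ k := Nat.lt_succ_iff.mp (Finset.mem_range.mp hi)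
        have hj1 : k + 1 - i = (k - i) + 1 := by omega
        rw [hj1]
        by_cases hj : k - i < d
        · have h1 : (d - (k-i)) * P.coeff (k-i) ≤ d * M :=
            Nat.mul_le_mul (by omega) (hMa _)
          have h2 : d * M ≤ d * M * P.coeff ((k-i)+1) := by
            calc d * M = d * M * 1 := by ring
              _ ≤ _ := Nat.mul_le_mul_left _ (hpos ((k-i)+1) hj)
          calc (P^n).coeff i * ((d - (k-i)) * P.coeff (k-i))
              ≤ (P^n).coeff i * (d*M*P.coeff ((k-i)+1)) :=
                Nat.mul_le_mul_left _ (le_trans h1 h2)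
            _ = (d*M) * ((P^n).coeff i * P.coeff ((k-i)+1)) := by ring
        · have hz : d - (k - i) = 0 := by omega
          simp [hz]
      calc _ ≤ _ := hle
        _ = (d*M) * ∑ i ∈ Finset.range (k+1), (P^n).coeff i * P.coeff (k+1-i) :=
            (Finset.mul_sum _ _ _).symm
        _ ≤ (d*M) * (P^(n+1)).coeff (k+1) := by
            apply Nat.mul_le_mul_left
            rw [hA n (k+1)]
            exact Finset.sum_le_sum_of_subset
              (Finset.range_subset_range.2 (Nat.le_succ _))
    have hstep : (n+1) * d * (P^(n+1)).coeff k
        ≤ (P^(n+1)).coeff k * k + (n+1) * ((d*M) * (P^(n+1)).coeff (k+1)) := by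
      rw [hD n k]
      exact Nat.add_le_add_left (Nat.mul_le_mul_left _ hsum) _
    have h3 : k * (P^(n+1)).coeff k + (P^(n+1)).coeff k
        ≤ k * (P^(n+1)).coeff k + (n+1) * ((d*M) * (P^(n+1)).coeff (k+1)) := by
      calc k * (P^(n+1)).coeff k + (P^(n+1)).coeff k
          = (k+1) * (P^(n+1)).coeff k := by ring
        _ ≤ ((n+1) * d) * (P^(n+1)).coeff k := Nat.mul_le_mul_right _ hk
        _ ≤ (P^(n+1)).coeff k * k + (n+1) * ((d*M) * (P^(n+1)).coeff (k+1)) := hstep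
        _ = k * (P^(n+1)).coeff k + (n+1) * ((d*M) * (P^(n+1)).coeff (k+1)) := by ring
    calc (P^(n+1)).coeff k ≤ (n+1) * ((d*M) * (P^(n+1)).coeff (k+1)) :=
        Nat.le_of_add_le_add_left h3
      _ = (n+1) * (d*M) * (P^(n+1)).coeff (k+1) := by ring
  -- conclusion
  refine ⟨1, ((d*M : ℕ) : ℝ), by exact_mod_cast Nat.mul_pos hd hM1, ?_⟩
  intro n hn k hk
  obtain ⟨m, rfl⟩ : ∃ m, n = m + 1 := ⟨n - 1, by omega⟩
  constructor
  · have h := ineq1 m k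
    have h' : (P^(m+1)).coeff (k+1) ≤ (d*M) * (m+1) * (P^(m+1)).coeff k := by
      calc _ ≤ _ := h
        _ = (d*M) * (m+1) * (P^(m+1)).coeff k := by ring
    exact_mod_cast h'
  · have h := ineq2 m k hk
    have h' : (P^(m+1)).coeff k ≤ (d*M) * (m+1) * (P^(m+1)).coeff (k+1) := by
      calc _ ≤ _ := h
        _ = (d*M) * (m+1) * (P^(m+1)).coeff (k+1) := by ring
    exact_mod_cast h'
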